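/- Let σ : ℝ → Matrix (Fin 2) (Fin 2) ℝ take values in symmetric positive-definite matrices, with inverse σ⁻¹, and suppose σ⁻¹(t) = σ̃⁻¹ + e^{-ε t}·S(t) where S(t) and ∂_t S(t) are bounded and ε > 0. Then σ(t) → σ̃ as t → ∞, and ψ(t) := tr(σ⁻¹·∂_t σ) satisfies |ψ(t)| ≤ C·e^{-ε t} for some constant C and all large t. -/

import Mathlib

attribute [local instance] Matrix.normedAddCommGroup Matrix.normedSpace

open Matrix

private lemma hasDerivAt_entry {F : ℝ → Matrix (Fin 2) (Fin 2) ℝ}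
    {F' : Matrix (Fin 2) (Fin 2) ℝ} {t : ℝ} (h : HasDerivAt F F' t) (i j : Fin 2) :
    HasDerivAt (fun s => F s i j) (F' i j) t := by
  have := ((Matrix.entryLinearMap ℝ ℝ i j).toContinuousLinearMap.hasFDerivAt
    (x := F t)).comp_hasDerivAt t h
  exact this

private lemma hasDerivAt_trace_mul {F G : ℝ → Matrix (Fin 2) (Fin 2) ℝ}
    {F' G' : Matrix (Fin 2) (Fin 2) ℝ} {t : ℝ}
    (hF : HasDerivAt F F' t) (hG : HasDerivAt G G' t) :
    HasDerivAt (fun s => Matrix.trace (G s * F s))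
      (Matrix.trace (G' * F t) + Matrix.trace (G t * F')) t := by
  have key : ∀ s, Matrix.trace (G s * F s) = ∑ i : Fin 2, ∑ j : Fin 2, G s i j * F s j i := by
    intro s
    simp [Matrix.trace, Matrix.mul_apply, Matrix.diag]
  have key2 : Matrix.trace (G' * F t) + Matrix.trace (G t * F') =
      ∑ i : Fin 2, ∑ j : Fin 2, (G' i j * F t j i + G t i j * F' j i) := by
    simp [Matrix.trace, Matrix.mul_apply, Matrix.diag, Finset.sum_add_distrib]
  rw [key2]
  have : HasDerivAt (fun s => ∑ i : Fin 2, ∑ j : Fin 2, G s i j * F s j i)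
      (∑ i : Fin 2, ∑ j : Fin 2, (G' i j * F t j i + G t i j * F' j i)) t := by
    apply HasDerivAt.fun_sum; intro i _
    apply HasDerivAt.fun_sum; intro j _
    exact (hasDerivAt_entry hG i j).mul (hasDerivAt_entry hF j i)
  simp only [key]
  exact this

private lemma abs_trace_mul_le (A B : Matrix (Fin 2) (Fin 2) ℝ) :
    |Matrix.trace (A * B)| ≤ 4 * ‖A‖ * ‖B‖ := by
  have h : Matrix.trace (A * B) = ∑ i : Fin 2, ∑ j : Fin 2, A i j * B j i := by
    simp [Matrix.trace, Matrix.mul_apply, Matrix.diag]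
  rw [h]
  have hA : ∀ i j, |A i j| ≤ ‖A‖ := fun i j => A.norm_entry_le_entrywise_sup_norm
  have hB : ∀ i j, |B i j| ≤ ‖B‖ := fun i j => B.norm_entry_le_entrywise_sup_norm
  have hB0 : 0 ≤ ‖B‖ := norm_nonneg _
  have hbound : ∀ i j : Fin 2, |A i j * B j i| ≤ ‖A‖ * ‖B‖ := by
    intro i j
    rw [abs_mul]
    exact mul_le_mul (hA i j) (hB j i) (abs_nonneg _) ((abs_nonneg _).trans (hA i j))
  calc |∑ i : Fin 2, ∑ j : Fin 2, A i j * B j i|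
      ≤ ∑ i : Fin 2, ∑ j : Fin 2, |A i j * B j i| := by
        refine (Finset.abs_sum_le_sum_abs _ _).trans ?_
        exact Finset.sum_le_sum fun i _ => Finset.abs_sum_le_sum_abs _ _
    _ ≤ ∑ _i : Fin 2, ∑ _j : Fin 2, ‖A‖ * ‖B‖ :=
        Finset.sum_le_sum fun i _ => Finset.sum_le_sum fun j _ => hbound i j
    _ = 4 * ‖A‖ * ‖B‖ := by simp [Finset.sum_const]; ring

/-- if σ⁻¹(t) = σ̃⁻¹ + e^{-εt} S(t) with S, ∂_t S bounded, then
σ(t) → σ̃ and ψ = tr(σ⁻¹ ∂_t σ) decays like e^{-εt}. -/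
theorem conformal_class_gauge_decay
    (ε : ℝ) (hε : 0 < ε)
    (σT : Matrix (Fin 2) (Fin 2) ℝ) (hσT : σT.PosDef) (hσTsymm : σT.IsSymm)
    (σ : ℝ → Matrix (Fin 2) (Fin 2) ℝ)
    (hσpos : ∀ t, (σ t).PosDef) (hσsymm : ∀ t, (σ t).IsSymm)
    (hσdiff : Differentiable ℝ σ)
    (S : ℝ → Matrix (Fin 2) (Fin 2) ℝ) (hSdiff : Differentiable ℝ S)
    (hinv : ∀ t, (σ t)⁻¹ = σT⁻¹ + Real.exp (-ε * t) • S t)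
    (B : ℝ) (hS : ∀ t, ‖S t‖ ≤ B) (hS' : ∀ t, ‖deriv S t‖ ≤ B) :
    Filter.Tendsto σ Filter.atTop (nhds σT) ∧
    ∃ C T' : ℝ, ∀ t ≥ T',
      |Matrix.trace ((σ t)⁻¹ * deriv σ t)| ≤ C * Real.exp (-ε * t) := by
  have hB : 0 ≤ B := (norm_nonneg _).trans (hS 0)
  -- invertibility
  have hdetσ : ∀ t, IsUnit (σ t).det := fun t => (Ne.isUnit (hσpos t).det_pos.ne')
  have hdetσT : IsUnit σT.det := Ne.isUnit hσT.det_pos.ne'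
  -- G := σ⁻¹ as explicit function
  set G : ℝ → Matrix (Fin 2) (Fin 2) ℝ := fun t => σT⁻¹ + Real.exp (-ε * t) • S t with hG
  have hGeq : ∀ t, (σ t)⁻¹ = G t := hinv
  -- G tends to σT⁻¹
  have hexp : Filter.Tendsto (fun t => Real.exp (-ε * t)) Filter.atTop (nhds 0) := by
    have := Real.tendsto_exp_atBot
    refine this.comp ?_
    exact Filter.Tendsto.const_mul_atTop_of_neg (neg_neg_iff_pos.mpr hε) Filter.tendsto_id
  have hGtend : Filter.Tendsto G Filter.atTop (nhds σT⁻¹) := by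
    have hsm : Filter.Tendsto (fun t => Real.exp (-ε * t) • S t) Filter.atTop
        (nhds (0 : Matrix (Fin 2) (Fin 2) ℝ)) := by
      refine tendsto_zero_iff_norm_tendsto_zero.mpr ?_
      have h0 : Filter.Tendsto (fun t => Real.exp (-ε * t) * B) Filter.atTop (nhds 0) := by
        simpa using hexp.mul_const B
      apply squeeze_zero (fun t => norm_nonneg _) (fun t => ?_) h0
      rw [norm_smul, Real.norm_eq_abs, abs_of_pos (Real.exp_pos _)]
      exact mul_le_mul_of_nonneg_left (hS t) (Real.exp_pos _).le
    have h := hsm.const_add σT⁻¹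
    rw [add_zero] at h
    exact h
  -- σ = G⁻¹ and inverse is continuous at σT⁻¹
  have hσeq : ∀ t, σ t = (G t)⁻¹ := by
    intro t
    rw [← hGeq t, Matrix.nonsing_inv_nonsing_inv _ (hdetσ t)]
  have hcont : ContinuousAt Inv.inv σT⁻¹ := by
    apply continuousAt_matrix_inv
    have hne : σT⁻¹.det ≠ 0 := by
      rw [Matrix.det_nonsing_inv, Ring.inverse_eq_inv']
      exact inv_ne_zero hσT.det_pos.ne'
    have : (Ring.inverse : ℝ → ℝ) = Inv.inv := funext fun x => Ring.inverse_eq_inv x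
    rw [this]
    exact continuousAt_inv₀ hne
  have htend : Filter.Tendsto σ Filter.atTop (nhds σT) := by
    have := hcont.tendsto.comp hGtend
    have hinvinv : σT⁻¹⁻¹ = σT := Matrix.nonsing_inv_nonsing_inv _ hdetσT
    rw [hinvinv] at this
    exact this.congr fun t => (hσeq t).symm
  refine ⟨htend, ?_⟩
  -- derivative of G
  have hGderiv : ∀ t, HasDerivAt G
      (Real.exp (-ε * t) • deriv S t + (-ε * Real.exp (-ε * t)) • S t) t := by
    intro t
    have hc : HasDerivAt (fun s : ℝ => Real.exp (-ε * s)) (-ε * Real.exp (-ε * t)) t := by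
      have h2 := (HasDerivAt.const_mul (-ε) (hasDerivAt_id t)).exp
      convert h2 using 1
      simp [mul_comm]
      show _ = Real.exp (-ε * t) * (-ε * 1); ring
    have h3 := hc.smul (hSdiff t).hasDerivAt
    have h4 := (hasDerivAt_const t σT⁻¹).add h3
    rw [zero_add] at h4
    exact h4
  -- trace identity: trace(σ⁻¹ σ') = - trace(G' σ)
  have hψ : ∀ t, Matrix.trace ((σ t)⁻¹ * deriv σ t) =
      -Matrix.trace ((Real.exp (-ε * t) • deriv S t + (-ε * Real.exp (-ε * t)) • S t) * σ t) := by
    intro t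
    set G' := Real.exp (-ε * t) • deriv S t + (-ε * Real.exp (-ε * t)) • S t with hG'
    have h1 : HasDerivAt (fun s => Matrix.trace (G s * σ s))
        (Matrix.trace (G' * σ t) + Matrix.trace (G t * deriv σ t)) t :=
      hasDerivAt_trace_mul (hσdiff t).hasDerivAt (hGderiv t)
    have h2 : (fun s => Matrix.trace (G s * σ s)) = fun _ => (2 : ℝ) := by
      funext s
      rw [← hGeq s, Matrix.nonsing_inv_mul _ (hdetσ s)]
      simp [Matrix.trace]
    rw [h2] at h1
    have h3 : Matrix.trace (G' * σ t) + Matrix.trace (G t * deriv σ t) = 0 :=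
      h1.unique (hasDerivAt_const t 2)
    rw [hGeq t]
    linarith [h3]
  -- eventual bound on ‖σ t‖
  have hnorm : ∀ᶠ t in Filter.atTop, ‖σ t‖ ≤ ‖σT‖ + 1 := by
    have := htend.norm.eventually (eventually_le_nhds (by linarith [norm_nonneg σT] : ‖σT‖ < ‖σT‖ + 1))
    exact this.mono fun t ht => ht
  obtain ⟨T', hT'⟩ := Filter.eventually_atTop.mp hnorm
  refine ⟨4 * (B + ε * B) * (‖σT‖ + 1), T', fun t ht => ?_⟩
  rw [hψ t, abs_neg]
  set G' := Real.exp (-ε * t) • deriv S t + (-ε * Real.exp (-ε * t)) • S t with hG'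
  have hG'norm : ‖G'‖ ≤ Real.exp (-ε * t) * (B + ε * B) := by
    calc ‖G'‖ ≤ ‖Real.exp (-ε * t) • deriv S t‖ + ‖(-ε * Real.exp (-ε * t)) • S t‖ :=
          norm_add_le _ _
      _ = Real.exp (-ε * t) * ‖deriv S t‖ + (ε * Real.exp (-ε * t)) * ‖S t‖ := by
          rw [norm_smul, norm_smul]
          simp [abs_of_pos (Real.exp_pos _), abs_mul, abs_of_pos hε]
      _ ≤ Real.exp (-ε * t) * B + (ε * Real.exp (-ε * t)) * B := by
          gcongr <;> [exact hS' t; exact hS t]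
      _ = Real.exp (-ε * t) * (B + ε * B) := by ring
  calc |Matrix.trace (G' * σ t)| ≤ 4 * ‖G'‖ * ‖σ t‖ := abs_trace_mul_le _ _
    _ ≤ 4 * (Real.exp (-ε * t) * (B + ε * B)) * (‖σT‖ + 1) := by
        gcongr <;> first | exact hG'norm | exact hT' t ht | positivity
    _ = 4 * (B + ε * B) * (‖σT‖ + 1) * Real.exp (-ε * t) := by ring
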